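/- Whitney decomposition with dyadic cubes: let (X,d,μ) be a doubling quasimetric measure space with quasimetric constant A, satisfying diam B(x;r) ≥ γr for all x,r, equipped with a dyadic system 𝒟* with parameters c₀, C₀, δ. Then for every open set Ω ⊊ X there is a pairwise disjoint collection 𝒫 ⊆ 𝒟* with Ω = ⋃_{P∈𝒫} P and diam P ≤ d(P, Ωᶜ) ≤ (4A²C₀/(γc₀δ)) diam P for every P ∈ 𝒫. -/

import Mathlib

open MeasureTheory
open scoped ENNReal

/-- Whitney decomposition with dyadic cubes on a doubling quasimetric measure space in which
`diam B(x;r) ≥ γr`: every open `Ω ⊊ X` is the union of a pairwise disjoint family of dyadic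
cubes `P` with `diam P ≤ d(P, Ωᶜ) ≤ (4A²C₀/(γc₀δ)) diam P`. -/
theorem stmt_13 {X : Type*} [MeasurableSpace X]
    (d : X → X → ℝ) (A : ℝ) (hA : 1 ≤ A)
    (hd_symm : ∀ x y, d x y = d y x) (hd_self : ∀ x, d x x = 0)
    (hd_nonneg : ∀ x y, 0 ≤ d x y)
    (hd_tri : ∀ x y z, d x y ≤ A * (d x z + d z y))
    (μ : Measure X) (C : ℝ) (hC : 1 ≤ C)
    (hball : ∀ x r, 0 < r → 0 < μ {y | d x y < r} ∧ μ {y | d x y < r} < ⊤)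
    (hdbl : ∀ x r, 0 < r → μ {y | d x y < 2 * r} ≤ ENNReal.ofReal C * μ {y | d x y < r})
    -- lower bound for diameters of balls
    (γ : ℝ) (hγ : 0 < γ)
    (hdiam : ∀ x r, 0 < r →
      ENNReal.ofReal (γ * r) ≤
        ⨆ y ∈ {z | d x z < r}, ⨆ z' ∈ {z | d x z < r}, ENNReal.ofReal (d y z'))
    -- dyadic system with parameters `c₀, C₀, δ`
    (c₀ C₀ δ : ℝ) (hc₀ : 0 < c₀) (hC₀ : c₀ ≤ C₀) (hδ0 : 0 < δ) (hδ1 : δ < 1)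
    (𝒟 : ℤ → Set (Set X))
    (hmeas : ∀ k, ∀ Q ∈ 𝒟 k, MeasurableSet Q)
    (hcover : ∀ k, ⋃₀ 𝒟 k = Set.univ)
    (hdisj : ∀ k, (𝒟 k).Pairwise Disjoint)
    (hnested : ∀ k l : ℤ, k ≤ l → ∀ Q ∈ 𝒟 l, ∀ Q' ∈ 𝒟 k, Disjoint Q Q' ∨ Q ⊆ Q')
    (hcenter : ∀ k, ∀ Q ∈ 𝒟 k, ∃ z,
      {y | d z y < c₀ * δ ^ k} ⊆ Q ∧ Q ⊆ {y | d z y < C₀ * δ ^ k})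
    (hparent : ∀ k : ℤ, ∀ Q ∈ 𝒟 k, ∃ Q' ∈ 𝒟 (k - 1), Q ⊆ Q')
    -- the open set
    (Ω : Set X) (hΩopen : ∀ x ∈ Ω, ∃ r, 0 < r ∧ {y | d x y < r} ⊆ Ω)
    (hΩne : Ω ≠ Set.univ) :
    ∃ 𝔓 : Set (Set X), (∀ P ∈ 𝔓, ∃ k, P ∈ 𝒟 k) ∧ 𝔓.Pairwise Disjoint ∧
      ⋃₀ 𝔓 = Ω ∧
      ∀ P ∈ 𝔓,
        (⨆ y ∈ P, ⨆ z ∈ P, ENNReal.ofReal (d y z)) ≤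
            (⨅ y ∈ P, ⨅ z ∈ Ωᶜ, ENNReal.ofReal (d y z)) ∧
          (⨅ y ∈ P, ⨅ z ∈ Ωᶜ, ENNReal.ofReal (d y z)) ≤
            ENNReal.ofReal (4 * A ^ 2 * C₀ / (γ * c₀ * δ)) *
              ⨆ y ∈ P, ⨆ z ∈ P, ENNReal.ofReal (d y z) := by
  classical
  have hA0 : (0:ℝ) < A := lt_of_lt_of_le one_pos hA
  have hC₀0 : (0:ℝ) < C₀ := lt_of_lt_of_le hc₀ hC₀
  have hδk : ∀ m : ℤ, (0:ℝ) < δ ^ m := fun m => zpow_pos hδ0 m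
  obtain ⟨w₀, hw₀⟩ : (Ωᶜ : Set X).Nonempty := by
    rw [Set.nonempty_compl]; exact hΩne
  -- pairwise distance bound within a cube
  have key_pair : ∀ (m : ℤ) (Q : Set X), Q ∈ 𝒟 m → ∀ y ∈ Q, ∀ w ∈ Q,
      d y w ≤ 2 * A * C₀ * δ ^ m := by
    intro m Q hQ y hy w hw
    obtain ⟨z, -, hz2⟩ := hcenter m Q hQ
    have h1 : d z y < C₀ * δ ^ m := hz2 hy
    have h2 : d z w < C₀ * δ ^ m := hz2 hw
    have htri := hd_tri y w z
    rw [hd_symm y z] at htri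
    nlinarith [hd_nonneg z y, hd_nonneg z w]
  have diam_ub : ∀ (m : ℤ) (Q : Set X), Q ∈ 𝒟 m →
      (⨆ y ∈ Q, ⨆ z ∈ Q, ENNReal.ofReal (d y z)) ≤ ENNReal.ofReal (2*A*C₀*δ^m) := by
    intro m Q hQ
    refine iSup₂_le fun y hy => iSup₂_le fun z hz => ?_
    exact ENNReal.ofReal_le_ofReal (key_pair m Q hQ y hy z hz)
  have diam_lb : ∀ (m : ℤ) (Q : Set X), Q ∈ 𝒟 m →
      ENNReal.ofReal (γ * c₀ * δ ^ m) ≤ ⨆ y ∈ Q, ⨆ z ∈ Q, ENNReal.ofReal (d y z) := by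
    intro m Q hQ
    obtain ⟨z, hz1, -⟩ := hcenter m Q hQ
    have hr : (0:ℝ) < c₀ * δ ^ m := mul_pos hc₀ (hδk m)
    calc ENNReal.ofReal (γ * c₀ * δ ^ m)
        = ENNReal.ofReal (γ * (c₀ * δ ^ m)) := by rw [mul_assoc]
      _ ≤ ⨆ y ∈ {w | d z w < c₀ * δ ^ m}, ⨆ z' ∈ {w | d z w < c₀ * δ ^ m},
            ENNReal.ofReal (d y z') := hdiam z (c₀ * δ ^ m) hr
      _ ≤ _ := by
          refine iSup₂_le fun y hy => iSup₂_le fun z' hz' => ?_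
          exact le_iSup₂_of_le y (hz1 hy) (le_iSup₂_of_le z' (hz1 hz') le_rfl)
  have dist_le : ∀ (Q : Set X) (p w : X), p ∈ Q → w ∈ Ωᶜ →
      (⨅ y ∈ Q, ⨅ z ∈ Ωᶜ, ENNReal.ofReal (d y z)) ≤ ENNReal.ofReal (d p w) := by
    intro Q p w hp hw
    exact le_trans (iInf₂_le p hp) (iInf₂_le w hw)
  -- good cubes are inside Ω
  have hGood_subset : ∀ (m : ℤ) (Q : Set X), Q ∈ 𝒟 m →
      (⨆ y ∈ Q, ⨆ z ∈ Q, ENNReal.ofReal (d y z)) ≤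
        (⨅ y ∈ Q, ⨅ z ∈ Ωᶜ, ENNReal.ofReal (d y z)) → Q ⊆ Ω := by
    intro m Q hQ hg p hp
    by_contra hpΩ
    have h0 : (⨅ y ∈ Q, ⨅ z ∈ Ωᶜ, ENNReal.ofReal (d y z)) ≤ 0 := by
      refine le_trans (dist_le Q p p hp hpΩ) ?_
      simp [hd_self p]
    have h1 := lt_of_lt_of_le (ENNReal.ofReal_pos.mpr
      (mul_pos (mul_pos hγ hc₀) (hδk m))) (le_trans (diam_lb m Q hQ) (le_trans hg h0))
    exact absurd h1 (by simp)
  -- existence of good cubes containing a point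
  have exists_good : ∀ x ∈ Ω, ∃ (m : ℤ) (Q : Set X), Q ∈ 𝒟 m ∧ x ∈ Q ∧
      (⨆ y ∈ Q, ⨆ z ∈ Q, ENNReal.ofReal (d y z)) ≤
        (⨅ y ∈ Q, ⨅ z ∈ Ωᶜ, ENNReal.ofReal (d y z)) := by
    intro x hx
    obtain ⟨r, hr, hrsub⟩ := hΩopen x hx
    obtain ⟨n, hn⟩ := exists_pow_lt_of_lt_one
      (show (0:ℝ) < r / (4 * A ^ 2 * C₀) by positivity) hδ1
    obtain ⟨Q, hQ, hxQ⟩ : ∃ Q ∈ 𝒟 (n : ℤ), x ∈ Q := by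
      have hxu : x ∈ ⋃₀ 𝒟 (n : ℤ) := by rw [hcover]; trivial
      simpa using hxu
    refine ⟨(n : ℤ), Q, hQ, hxQ, ?_⟩
    refine le_trans (diam_ub (n:ℤ) Q hQ)
      (le_iInf₂ fun y hy => le_iInf₂ fun w hw => ENNReal.ofReal_le_ofReal ?_)
    have hxy : d x y ≤ 2*A*C₀*δ^(n:ℤ) := key_pair (n:ℤ) Q hQ x hxQ y hy
    have hxw : r ≤ d x w := by
      by_contra h
      push_neg at h
      exact hw (hrsub h)
    have htri := hd_tri x w y
    have h4 : 4 * A ^ 2 * C₀ * δ ^ (n:ℤ) < r := by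
      rw [zpow_natCast]
      have := (lt_div_iff₀ (by positivity : (0:ℝ) < 4 * A ^ 2 * C₀)).mp hn
      linarith
    nlinarith [hd_nonneg y w, hd_nonneg x y, hδk (n:ℤ),
      mul_le_mul_of_nonneg_left hxy hA0.le]
  -- levels of good cubes containing a point are bounded below
  have good_bdd : ∀ x : X, ∃ b : ℤ, ∀ (m : ℤ) (Q : Set X), Q ∈ 𝒟 m → x ∈ Q →
      (⨆ y ∈ Q, ⨆ z ∈ Q, ENNReal.ofReal (d y z)) ≤
        (⨅ y ∈ Q, ⨅ z ∈ Ωᶜ, ENNReal.ofReal (d y z)) → b ≤ m := by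
    intro x
    have hM0 : (0:ℝ) ≤ d x w₀ := hd_nonneg x w₀
    obtain ⟨n, hn⟩ := exists_pow_lt_of_lt_one
      (show (0:ℝ) < γ * c₀ / (d x w₀ + 1) by positivity) hδ1
    refine ⟨-(n:ℤ), fun m Q hQ hxQ hg => ?_⟩
    by_contra hk
    push_neg at hk
    have h1 : ENNReal.ofReal (γ*c₀*δ^m) ≤ ENNReal.ofReal (d x w₀) :=
      le_trans (diam_lb m Q hQ) (le_trans hg (dist_le Q x w₀ hxQ hw₀))
    have h2 : γ*c₀*δ^m ≤ d x w₀ := by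
      rwa [ENNReal.ofReal_le_ofReal_iff hM0] at h1
    have hmono : δ ^ (-(n:ℤ)) ≤ δ ^ m :=
      zpow_le_zpow_right_of_le_one₀ hδ0 hδ1.le hk.le
    have hprod : (1:ℝ) ≤ δ ^ m * δ ^ n := by
      have : (1:ℝ) = δ ^ (-(n:ℤ)) * δ ^ (n:ℤ) := by
        rw [← zpow_add₀ (ne_of_gt hδ0)]; simp
      rw [← zpow_natCast δ n, this]
      exact mul_le_mul_of_nonneg_right hmono (hδk _).le
    have hn' : δ ^ n * (d x w₀ + 1) < γ * c₀ :=
      (lt_div_iff₀ (by positivity)).mp hn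
    nlinarith [hδk m, pow_pos hδ0 n, mul_pos hγ hc₀,
      mul_le_mul_of_nonneg_right h2 (pow_pos hδ0 n).le,
      mul_le_mul_of_nonneg_left hprod (mul_pos hγ hc₀).le]
  -- choose a minimal-level good cube for each point
  have hmain : ∀ x : X, x ∈ Ω → ∃ (m : ℤ) (Q : Set X), Q ∈ 𝒟 m ∧ x ∈ Q ∧
      ((⨆ y ∈ Q, ⨆ z ∈ Q, ENNReal.ofReal (d y z)) ≤
        (⨅ y ∈ Q, ⨅ z ∈ Ωᶜ, ENNReal.ofReal (d y z))) ∧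
      ∀ (m' : ℤ) (Q' : Set X), Q' ∈ 𝒟 m' → x ∈ Q' →
        (⨆ y ∈ Q', ⨆ z ∈ Q', ENNReal.ofReal (d y z)) ≤
          (⨅ y ∈ Q', ⨅ z ∈ Ωᶜ, ENNReal.ofReal (d y z)) → m ≤ m' := by
    intro x hx
    obtain ⟨b, hb⟩ := good_bdd x
    obtain ⟨m, hm, hleast⟩ := Int.exists_least_of_bdd
      (P := fun m => ∃ Q, Q ∈ 𝒟 m ∧ x ∈ Q ∧
        (⨆ y ∈ Q, ⨆ z ∈ Q, ENNReal.ofReal (d y z)) ≤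
          (⨅ y ∈ Q, ⨅ z ∈ Ωᶜ, ENNReal.ofReal (d y z)))
      ⟨b, fun z hz => by obtain ⟨Q, h1, h2, h3⟩ := hz; exact hb z Q h1 h2 h3⟩
      (by obtain ⟨m, Q, h1, h2, h3⟩ := exists_good x hx; exact ⟨m, Q, h1, h2, h3⟩)
    obtain ⟨Q, h1, h2, h3⟩ := hm
    exact ⟨m, Q, h1, h2, h3, fun m' Q' h1' h2' h3' => hleast m' ⟨Q', h1', h2', h3'⟩⟩
  choose! f Q hQmem hxQ hgood hmin using hmain
  refine ⟨Q '' Ω, ?_, ?_, ?_, ?_⟩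
  · rintro P ⟨x, hx, rfl⟩
    exact ⟨f x, hQmem x hx⟩
  · have hkey : ∀ x ∈ Ω, ∀ y ∈ Ω, f x ≤ f y → Q x ≠ Q y → Disjoint (Q x) (Q y) := by
      intro x hx y hy hle hne
      rcases hnested (f x) (f y) hle (Q y) (hQmem y hy) (Q x) (hQmem x hx) with h | h
      · exact h.symm
      · have hyx : y ∈ Q x := h (hxQ y hy)
        have hle' : f y ≤ f x := hmin y hy (f x) (Q x) (hQmem x hx) hyx (hgood x hx)
        have hk : f x = f y := le_antisymm hle hle'
        exact hdisj (f x) (hQmem x hx) (hk ▸ hQmem y hy) hne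
    rintro _ ⟨x, hx, rfl⟩ _ ⟨y, hy, rfl⟩ hne
    rcases le_total (f x) (f y) with h | h
    · exact hkey x hx y hy h hne
    · exact (hkey y hy x hx h (Ne.symm hne)).symm
  · apply subset_antisymm
    · rintro p ⟨P, ⟨x, hx, rfl⟩, hp⟩
      exact hGood_subset (f x) (Q x) (hQmem x hx) (hgood x hx) hp
    · intro x hx
      exact ⟨Q x, ⟨x, hx, rfl⟩, hxQ x hx⟩
  · rintro _ ⟨x, hx, rfl⟩
    refine ⟨hgood x hx, ?_⟩
    obtain ⟨Q', hQ'mem, hsub⟩ := hparent (f x) (Q x) (hQmem x hx)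
    have hxQ' : x ∈ Q' := hsub (hxQ x hx)
    have hnotgood : ¬ ((⨆ y ∈ Q', ⨆ z ∈ Q', ENNReal.ofReal (d y z)) ≤
        (⨅ y ∈ Q', ⨅ z ∈ Ωᶜ, ENNReal.ofReal (d y z))) := by
      intro hg
      have := hmin x hx (f x - 1) Q' hQ'mem hxQ' hg
      omega
    have hlt : (⨅ y ∈ Q', ⨅ z ∈ Ωᶜ, ENNReal.ofReal (d y z)) <
        ENNReal.ofReal (2*A*C₀*δ^(f x - 1)) :=
      lt_of_lt_of_le (not_le.mp hnotgood) (diam_ub (f x - 1) Q' hQ'mem)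
    rw [show (⨅ y ∈ Q', ⨅ z ∈ Ωᶜ, ENNReal.ofReal (d y z)) =
        ⨅ y, ⨅ (_ : y ∈ Q'), ⨅ z, ⨅ (_ : z ∈ Ωᶜ), ENNReal.ofReal (d y z) from rfl,
      iInf_lt_iff] at hlt
    obtain ⟨y', hlt⟩ := hlt
    rw [iInf_lt_iff] at hlt
    obtain ⟨hy', hlt⟩ := hlt
    rw [iInf_lt_iff] at hlt
    obtain ⟨w, hlt⟩ := hlt
    rw [iInf_lt_iff] at hlt
    obtain ⟨hw, hyw⟩ := hlt
    have hyw' : d y' w < 2*A*C₀*δ^(f x - 1) := by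
      rwa [ENNReal.ofReal_lt_ofReal_iff (by positivity)] at hyw
    obtain ⟨z, hz1, -⟩ := hcenter (f x) (Q x) (hQmem x hx)
    have hzQ : z ∈ Q x := hz1 (by
      simp only [Set.mem_setOf_eq, hd_self]
      exact mul_pos hc₀ (hδk _))
    have hzy' : d z y' ≤ 2*A*C₀*δ^(f x - 1) :=
      key_pair (f x - 1) Q' hQ'mem z (hsub hzQ) y' hy'
    have hzw : d z w ≤ 4*A^2*C₀*δ^(f x - 1) := by
      have htri := hd_tri z w y'
      nlinarith [hd_nonneg z y', hd_nonneg y' w, hδk (f x - 1),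
        mul_le_mul_of_nonneg_left hzy' hA0.le,
        mul_le_mul_of_nonneg_left hyw'.le hA0.le]
    have hdistle : (⨅ y ∈ Q x, ⨅ z ∈ Ωᶜ, ENNReal.ofReal (d y z)) ≤
        ENNReal.ofReal (4*A^2*C₀*δ^(f x - 1)) :=
      le_trans (dist_le (Q x) z w hzQ hw) (ENNReal.ofReal_le_ofReal hzw)
    have heq : ENNReal.ofReal (4*A^2*C₀/(γ*c₀*δ)) * ENNReal.ofReal (γ*c₀*δ^(f x)) =
        ENNReal.ofReal (4*A^2*C₀*δ^(f x - 1)) := by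
      rw [← ENNReal.ofReal_mul (by positivity)]
      congr 1
      rw [zpow_sub_one₀ (ne_of_gt hδ0)]
      field_simp
    calc (⨅ y ∈ Q x, ⨅ z ∈ Ωᶜ, ENNReal.ofReal (d y z))
        ≤ ENNReal.ofReal (4*A^2*C₀*δ^(f x - 1)) := hdistle
      _ = ENNReal.ofReal (4*A^2*C₀/(γ*c₀*δ)) * ENNReal.ofReal (γ*c₀*δ^(f x)) := heq.symm
      _ ≤ ENNReal.ofReal (4 * A ^ 2 * C₀ / (γ * c₀ * δ)) *
            ⨆ y ∈ Q x, ⨆ z ∈ Q x, ENNReal.ofReal (d y z) := by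
          exact mul_le_mul_right (diam_lb (f x) (Q x) (hQmem x hx)) _
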